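/- Linearization of the HJI PDE under Assumption 1: let ξ : ℝⁿ × ℝ → ℝ be everywhere positive, twice continuously differentiable in x and continuously differentiable in t at the point (x, t), let λ > 0, and define J := −λ · log ∘ ξ. Assume the coefficient matrices satisfy Assumption 1 at (x, t): ΣΣᵀ = λ(G_u R_u⁻¹ G_uᵀ − G_v R_v⁻¹ G_vᵀ). Then J satisfies the HJI equation −∂ₜJ = V + fᵀ∇ₓJ + (1/2)Tr(ΣΣᵀ∇ₓ²J) + (1/2)(∇ₓJ)ᵀ(G_v R_v⁻¹ G_vᵀ − G_u R_u⁻¹ G_uᵀ)∇ₓJ at (x, t) if and only if ξ satisfies the linear backward equation ∂ₜξ = (V/λ)ξ − fᵀ∇ₓξ − (1/2)Tr(ΣΣᵀ∇ₓ²ξ) at (x, t). -/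

import Mathlib

open Matrix

/-- Partial derivative in the time variable of `g : (state, time) ↦ ℝ`. -/
noncomputable def pderivT {n : ℕ} (g : (Fin n → ℝ) → ℝ → ℝ) (x : Fin n → ℝ) (t : ℝ) : ℝ :=
  deriv (fun s => g x s) t

/-- Gradient in the state variable: `(∇ₓ g)ᵢ = ∂ᵢ g`. -/
noncomputable def gradX {n : ℕ} (g : (Fin n → ℝ) → ℝ → ℝ) (x : Fin n → ℝ) (t : ℝ) :
    Fin n → ℝ :=
  fun i => fderiv ℝ (fun y => g y t) x (Pi.single i 1)

/-- Hessian matrix in the state variable: `(∇ₓ² g)ᵢⱼ = ∂ᵢ∂ⱼ g`. -/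
noncomputable def hessX {n : ℕ} (g : (Fin n → ℝ) → ℝ → ℝ) (x : Fin n → ℝ) (t : ℝ) :
    Matrix (Fin n) (Fin n) ℝ :=
  fun i j =>
    fderiv ℝ (fun y => fderiv ℝ (fun z => g z t) y (Pi.single j 1)) x (Pi.single i 1)

lemma aux_iff (lam ξ0 a b c q V : ℝ) (hl : lam ≠ 0) (h0 : ξ0 ≠ 0) :
    (-(-lam * (a / ξ0)) =
      V + (-lam * ξ0⁻¹) * b + (1/2) * ((-lam * ξ0⁻¹) * c + (lam * (ξ0^2)⁻¹) * q)
        + (1/2) * ((-lam * (ξ0^2)⁻¹) * q))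
    ↔ (a = V / lam * ξ0 - b - (1/2) * c) := by
  rw [show -(-lam * (a / ξ0)) = (lam / ξ0) * a from by field_simp,
      show V + (-lam * ξ0⁻¹) * b + (1/2) * ((-lam * ξ0⁻¹) * c + (lam * (ξ0^2)⁻¹) * q)
        + (1/2) * ((-lam * (ξ0^2)⁻¹) * q) = (lam / ξ0) * (V / lam * ξ0 - b - (1/2) * c) from by
        field_simp; ring,
      mul_right_inj' (div_ne_zero hl h0)]

/-- Linearization of the HJI PDE under Assumption 1: for `ξ > 0` twice
continuously differentiable in `x` and continuously differentiable in `t` at `(x, t)`,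
`λ > 0`, `J := −λ log ∘ ξ`, and coefficient matrices satisfying Assumption 1
`ΣΣᵀ = λ(G_uR_u⁻¹G_uᵀ − G_vR_v⁻¹G_vᵀ)`, the function `J` satisfies the HJI equation
`−∂ₜJ = V + fᵀ∇ₓJ + (1/2)Tr(ΣΣᵀ∇ₓ²J) + (1/2)(∇ₓJ)ᵀ(G_vR_v⁻¹G_vᵀ − G_uR_u⁻¹G_uᵀ)∇ₓJ`
at `(x, t)` iff `ξ` satisfies the linear backward equation
`∂ₜξ = (V/λ)ξ − fᵀ∇ₓξ − (1/2)Tr(ΣΣᵀ∇ₓ²ξ)` at `(x, t)`. -/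
theorem cole_hopf_linearizes_HJI {n m l k : ℕ} (hn : 0 < n) (hm : 0 < m) (hl : 0 < l)
    (hk : 0 < k)
    (f : Fin n → ℝ) (V : ℝ)
    (Sig : Matrix (Fin n) (Fin k) ℝ)
    (Gu : Matrix (Fin n) (Fin m) ℝ) (Gv : Matrix (Fin n) (Fin l) ℝ)
    (Ru : Matrix (Fin m) (Fin m) ℝ) (Rv : Matrix (Fin l) (Fin l) ℝ)
    (hRu : Ru.PosDef) (hRv : Rv.PosDef)
    (ξ : (Fin n → ℝ) → ℝ → ℝ) (x : Fin n → ℝ) (t : ℝ)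
    (hpos : ∀ y s, 0 < ξ y s)
    (hreg_x : ContDiffAt ℝ 2 (fun y => ξ y t) x)
    (hreg_t : ContDiffAt ℝ 1 (fun s => ξ x s) t)
    (lam : ℝ) (hlam : 0 < lam)
    (hassumption1 : Sig * Sigᵀ = lam • (Gu * Ru⁻¹ * Guᵀ - Gv * Rv⁻¹ * Gvᵀ))
    (J : (Fin n → ℝ) → ℝ → ℝ) (hJ : J = fun y s => -lam * Real.log (ξ y s)) :
    (-(pderivT J x t) =
        V + f ⬝ᵥ gradX J x t
          + (1 / 2) * (∑ i, ∑ j, (Sig * Sigᵀ) i j * hessX J x t i j)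
          + (1 / 2) * (gradX J x t ⬝ᵥ ((Gv * Rv⁻¹ * Gvᵀ - Gu * Ru⁻¹ * Guᵀ) *ᵥ gradX J x t)))
    ↔
    (pderivT ξ x t =
        (V / lam) * ξ x t - f ⬝ᵥ gradX ξ x t
          - (1 / 2) * (∑ i, ∑ j, (Sig * Sigᵀ) i j * hessX ξ x t i j)) := by
  subst hJ
  have hξ0 : (0:ℝ) < ξ x t := hpos x t
  have hξ0' : ξ x t ≠ 0 := ne_of_gt hξ0
  have hlam' : lam ≠ 0 := ne_of_gt hlam
  -- time derivative of J
  have hdt : HasDerivAt (fun s => ξ x s) (pderivT ξ x t) t :=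
    (hreg_t.differentiableAt (by norm_num)).hasDerivAt
  have hJt : pderivT (fun y s => -lam * Real.log (ξ y s)) x t
      = -lam * (pderivT ξ x t / ξ x t) := by
    have h := ((hdt.log hξ0').const_mul (-lam)).deriv
    simpa [pderivT] using h
  -- spatial gradient of J
  have hFd : DifferentiableAt ℝ (fun y => ξ y t) x := hreg_x.differentiableAt (by norm_num)
  have hF' : HasFDerivAt (fun y => ξ y t) (fderiv ℝ (fun y => ξ y t) x) x := hFd.hasFDerivAt
  have hgrad : gradX (fun y s => -lam * Real.log (ξ y s)) x t
      = fun i => -lam * ((ξ x t)⁻¹ * gradX ξ x t i) := by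
    funext i
    have h := (hF'.log hξ0').const_mul (-lam)
    simp only [gradX]
    rw [h.fderiv]
    simp [ContinuousLinearMap.smul_apply, smul_eq_mul]
  -- Hessian of J
  have hev : ∀ jj : Fin n,
      (fun y => fderiv ℝ (fun z => -lam * Real.log (ξ z t)) y (Pi.single jj 1)) =ᶠ[nhds x]
      (fun y => -lam * ((ξ y t)⁻¹ * fderiv ℝ (fun z => ξ z t) y (Pi.single jj 1))) := by
    intro jj
    filter_upwards [hreg_x.eventually (by simp)] with y hy
    have hyd : DifferentiableAt ℝ (fun z => ξ z t) y := hy.differentiableAt (by norm_num)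
    have h := (hyd.hasFDerivAt.log (ne_of_gt (hpos y t))).const_mul (-lam)
    rw [h.fderiv]
    simp [ContinuousLinearMap.smul_apply, smul_eq_mul]
  have hhess : ∀ i j, hessX (fun y s => -lam * Real.log (ξ y s)) x t i j
      = -lam * ((ξ x t)⁻¹ * hessX ξ x t i j
          + gradX ξ x t j * (gradX ξ x t i * -((ξ x t)^2)⁻¹)) := by
    intro i j
    have hDj : DifferentiableAt ℝ (fun y => fderiv ℝ (fun z => ξ z t) y (Pi.single j 1)) x :=
      ((hreg_x.fderiv_right (m := 1) (by norm_num)).clm_apply contDiffAt_const).differentiableAt (by norm_num)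
    have hinv : HasFDerivAt (fun y => (ξ y t)⁻¹)
        ((ContinuousLinearMap.smulRight (1 : ℝ →L[ℝ] ℝ) (-((ξ x t) ^ 2)⁻¹)).comp
          (fderiv ℝ (fun y => ξ y t) x)) x :=
      (hasFDerivAt_inv hξ0').comp x hF'
    have hmul : HasFDerivAt (fun y => -lam * ((ξ y t)⁻¹ *
        fderiv ℝ (fun z => ξ z t) y (Pi.single j 1))) _ x :=
      (hinv.mul hDj.hasFDerivAt).const_mul (-lam)
    have hkey : hessX (fun y s => -lam * Real.log (ξ y s)) x t i j
        = fderiv ℝ (fun y => -lam * ((ξ y t)⁻¹ *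
            fderiv ℝ (fun z => ξ z t) y (Pi.single j 1))) x (Pi.single i 1) := by
      simp only [hessX]
      rw [(hev j).fderiv_eq]
    rw [hkey, hmul.fderiv]
    simp only [ContinuousLinearMap.add_apply, ContinuousLinearMap.smul_apply,
      ContinuousLinearMap.comp_apply, ContinuousLinearMap.smulRight_apply,
      ContinuousLinearMap.one_apply, smul_eq_mul, gradX, hessX]
    try ring
  -- Assumption 1 rewritten
  have hM : Gv * Rv⁻¹ * Gvᵀ - Gu * Ru⁻¹ * Guᵀ = (-(1/lam)) • (Sig * Sigᵀ) := by
    rw [hassumption1, smul_smul, show -(1/lam) * lam = -1 by field_simp]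
    simp
  rw [hJt, hgrad, hM]
  simp only [hhess, dotProduct, mulVec, Matrix.smul_apply, smul_eq_mul]
  -- push constants out of the sums
  have e1 : ∑ i, f i * (-lam * ((ξ x t)⁻¹ * gradX ξ x t i))
      = (-lam * (ξ x t)⁻¹) * ∑ i, f i * gradX ξ x t i := by
    rw [Finset.mul_sum]; exact Finset.sum_congr rfl fun i _ => by ring
  have e2 : ∑ i, ∑ j, (Sig * Sigᵀ) i j * (-lam * ((ξ x t)⁻¹ * hessX ξ x t i j
        + gradX ξ x t j * (gradX ξ x t i * -((ξ x t)^2)⁻¹)))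
      = (-lam * (ξ x t)⁻¹) * (∑ i, ∑ j, (Sig * Sigᵀ) i j * hessX ξ x t i j)
        + (lam * ((ξ x t)^2)⁻¹) *
          (∑ i, ∑ j, (Sig * Sigᵀ) i j * (gradX ξ x t i * gradX ξ x t j)) := by
    rw [Finset.mul_sum, Finset.mul_sum, ← Finset.sum_add_distrib]
    refine Finset.sum_congr rfl fun i _ => ?_
    rw [Finset.mul_sum, Finset.mul_sum, ← Finset.sum_add_distrib]
    exact Finset.sum_congr rfl fun j _ => by ring
  have e3 : ∑ i, (-lam * ((ξ x t)⁻¹ * gradX ξ x t i)) *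
        (∑ j, (-(1/lam) * (Sig * Sigᵀ) i j) * (-lam * ((ξ x t)⁻¹ * gradX ξ x t j)))
      = (-lam * ((ξ x t)^2)⁻¹) *
          (∑ i, ∑ j, (Sig * Sigᵀ) i j * (gradX ξ x t i * gradX ξ x t j)) := by
    rw [Finset.mul_sum]
    refine Finset.sum_congr rfl fun i _ => ?_
    rw [Finset.mul_sum, Finset.mul_sum]
    refine Finset.sum_congr rfl fun j _ => ?_
    field_simp
  rw [e1, e2, e3]
  exact aux_iff lam (ξ x t) (pderivT ξ x t) (∑ i, f i * gradX ξ x t i)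
    (∑ i, ∑ j, (Sig * Sigᵀ) i j * hessX ξ x t i j)
    (∑ i, ∑ j, (Sig * Sigᵀ) i j * (gradX ξ x t i * gradX ξ x t j)) V hlam' hξ0'
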